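/- For every k ≥ 2, let v = s_{2k}·b (so v = x_{2k}·a·b·b and |v| = F_{2k}+1). Among the conjugates of v sorted lexicographically, the largest is b·b·x_{2k}·a and the second largest is b·x_{2k}·a·b; every other conjugate of v is lexicographically smaller than b·x_{2k}·a·b. -/

import Mathlib

namespace BWT

/-- The two-letter ordered alphabet `{a, b}` with `a < b`, encoded as `Bool` with `a = false`. -/
abbrev Letter := Bool

/-- The letter `a`. -/
abbrev la : Letter := false

/-- The letter `b`. -/
abbrev lb : Letter := true

/-- A (binary) word. -/
abbrev Word := List Letter

/-- All conjugates (rotations) of a word, listed by rotation amount. -/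
def rotations (w : Word) : List Word := (List.range w.length).map w.rotate

/-- A word is primitive if all of its `|w|` conjugates are distinct. -/
def Primitive (w : Word) : Prop := (rotations w).Nodup

/-- The conjugates of `w`, sorted lexicographically. -/
def sortedRotations (w : Word) : List Word := (rotations w).insertionSort (· ≤ ·)

/-- The Burrows–Wheeler transform: last letters of the lexicographically sorted conjugates. -/
def bwt (w : Word) : Word := (sortedRotations w).map (fun u => u.getLastD la)

/-- Number of maximal equal-letter runs of a word. -/
def runs (w : Word) : ℕ := (w.destutter (· ≠ ·)).length

/-- `r(w)`: the number of runs of the BWT of `w`. -/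
def rr (w : Word) : ℕ := runs (bwt w)

/-- The runs-ratio `ρ(w)`. -/
def rho (w : Word) : ℚ :=
  max ((rr w : ℚ) / (rr w.reverse : ℚ)) ((rr w.reverse : ℚ) / (rr w : ℚ))

/-- `n`-th power (concatenation) of a word. -/
def wpow (w : Word) : ℕ → Word
  | 0 => []
  | n + 1 => w ++ wpow w n

/-- Standard words for the directive sequence `d`:
`s 0 = b`, `s 1 = a`, `s (i+2) = (s (i+1))^(d i) · s i`. -/
def std (d : ℕ → ℕ) : ℕ → Word
  | 0 => [lb]
  | 1 => [la]
  | n + 2 => wpow (std d (n + 1)) (d n) ++ std d n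

/-- Fibonacci words: `s 0 = b`, `s 1 = a`, `s (i+2) = s (i+1) · s i`. -/
def fw : ℕ → Word
  | 0 => [lb]
  | 1 => [la]
  | n + 2 => fw (n + 1) ++ fw n

/-- Fibonacci numbers with `F 0 = F 1 = 1`. -/
def fib : ℕ → ℕ
  | 0 => 1
  | 1 => 1
  | n + 2 => fib (n + 1) + fib n

/-- The word `x i`, i.e. the Fibonacci word of order `i` with its last two letters removed
(so that `s_{2k} = x_{2k}·ab` and `s_{2k+1} = x_{2k+1}·ba`). -/
def x (i : ℕ) : Word := (fw i).take ((fw i).length - 2)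

/-- `u` is a circular factor of `w`: a prefix of some conjugate of `w`. -/
def CircFactor (u w : Word) : Prop := ∃ i < w.length, u <+: w.rotate i

/-- A circular factor `u` is left-special in `w` if both `a·u` and `b·u` are circular factors. -/
def LeftSpecial (u w : Word) : Prop := CircFactor (la :: u) w ∧ CircFactor (lb :: u) w

/-- Number of occurrences of `u` as a circular factor of `w`. -/
def occ (u w : Word) : ℕ :=
  ((List.range w.length).filter (fun j => decide (u <+: w.rotate j))).length

end BWT


open BWT List

namespace Stmt5

lemma fw_pos : ∀ n, 0 < (fw n).length
  | 0 => by simp [fw]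
  | 1 => by simp [fw]
  | n + 2 => by
      rw [fw]; rw [length_append]
      have := fw_pos (n+1); omega

lemma fw_prefix_a : ∀ n, 1 ≤ n → [la] <+: fw n
  | 1, _ => by simp [fw]
  | (n+2), _ => by
      rw [fw]
      exact (fw_prefix_a (n+1) (by omega)).trans (prefix_append _ _)

lemma fw_prefix_succ (n : ℕ) (hn : 1 ≤ n) : fw n <+: fw (n+1) := by
  obtain ⟨m, rfl⟩ : ∃ m, n = m + 1 := ⟨n - 1, by omega⟩
  rw [show m + 1 + 1 = m + 2 from rfl, fw]
  exact prefix_append _ _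

lemma fw_prefix_mono {i j : ℕ} (hi : 1 ≤ i) (hij : i ≤ j) : fw i <+: fw j := by
  induction j, hij using Nat.le_induction with
  | base => exact prefix_rfl
  | succ j hj ih => exact ih.trans (fw_prefix_succ j (by omega))

lemma prefix_append_left {u v : Word} (w : Word) (h : u <+: v) : w ++ u <+: w ++ v := by
  obtain ⟨t, ht⟩ := h
  exact ⟨t, by rw [append_assoc, ht]⟩

lemma pre2 (xw : Word) (p q : Letter) : xw ++ [p] <+: xw ++ [p, q] :=
  ⟨[q], by simp⟩

/-- parity letter: `c m = lb` iff `m` even. -/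
def c (m : ℕ) : Letter := if m % 2 = 0 then lb else la

lemma c_even {m : ℕ} (h : m % 2 = 0) : c m = lb := by simp [c, h]
lemma c_odd {m : ℕ} (h : m % 2 = 1) : c m = la := by simp [c, h]
lemma c_add_two (m : ℕ) : c (m+2) = c m := by simp [c, Nat.add_mod]

lemma fw_swap : ∀ m, ∃ xw : Word,
    fw m ++ fw (m+1) = xw ++ [c m, c (m+1)] ∧ fw (m+1) ++ fw m = xw ++ [c (m+1), c m]
  | 0 => ⟨[], by simp [fw, c]⟩
  | (m+1) => by
      obtain ⟨xw, h1, h2⟩ := fw_swap m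
      refine ⟨fw (m+1) ++ xw, ?_, ?_⟩
      · rw [show m+1+1 = m+2 from rfl, fw, ← append_assoc, append_assoc (fw (m+1)), h2,
          ← append_assoc, c_add_two]
      · rw [show m+1+1 = m+2 from rfl, fw, append_assoc, h1, ← append_assoc, c_add_two]

lemma fw_decomp (m : ℕ) : ∃ xw : Word, fw (m+2) = xw ++ [c (m+1), c m] := by
  obtain ⟨xw, _, h2⟩ := fw_swap m
  exact ⟨xw, by rw [fw, h2]⟩

lemma fw_chain : ∀ n, List.Chain' (fun p q => p = la ∨ q = la) (fw n)
  | 0 => by simp [fw, List.Chain']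
  | 1 => by simp [fw, List.Chain']
  | 2 => by simp [fw, List.Chain', List.isChain_append]
  | (n+3) => by
      rw [show n+3 = (n+1)+2 from rfl, fw]
      show List.IsChain _ _
      rw [List.isChain_append]
      refine ⟨fw_chain (n+2), fw_chain (n+1), ?_⟩
      intro p _ q hq
      obtain ⟨t, ht⟩ := fw_prefix_a (n+1) (by omega)
      right
      rw [← ht] at hq
      simpa using hq

lemma noBB {n i : ℕ} (h : i + 1 < (fw n).length) (hb : (fw n)[i]'(by omega) = lb) :
    (fw n)[i+1]'h = la := by
  have hc := (List.isChain_iff_getElem.mp (fw_chain n)) i (by omega)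
  beta_reduce at hc
  rcases hc with hc | hc
  · rw [hb] at hc; exact absurd hc (by decide)
  · exact hc

/-- mismatch witness: `u` is lexicographically less than `w` with a strict letter mismatch. -/
def Mis (u w : Word) : Prop := ∃ p : Word, p ++ [la] <+: u ∧ p ++ [lb] <+: w

lemma mis_lt {u w : Word} (h : Mis u w) : u < w := by
  obtain ⟨p, ⟨u2, hu⟩, ⟨w2, hw⟩⟩ := h
  subst hu; subst hw
  show List.Lex (· < ·) _ _
  induction p with
  | nil => exact List.Lex.rel (by decide)
  | cons a t ih => exact List.Lex.cons ih

lemma mis_mono {u w u' w' : Word} (h : Mis u w) (hu : u <+: u') (hw : w <+: w') : Mis u' w' := by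
  obtain ⟨p, h1, h2⟩ := h
  exact ⟨p, h1.trans hu, h2.trans hw⟩

/-- Main structural lemma. -/
lemma main : ∀ n, ∀ j, (h : j + 1 < (fw n).length) → (fw n)[j]'(by omega) = lb →
    Mis ((fw n).drop (j+1)) (fw n) ∨
    (n % 2 = 1 ∧ ∃ r, r % 2 = 1 ∧ r < n ∧ (fw n).drop (j+1) = fw r)
  | 0, j, h, _ => by simp [fw] at h
  | 1, j, h, _ => by simp [fw] at h
  | 2, j, h, hb => by
      have hj : j = 0 := by
        have h2 : (fw 2).length = 2 := rfl
        omega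
      subst hj
      exact absurd hb (by decide : la ≠ lb)
  | (n+3), j, h, hb => by
      have hw : fw (n+3) = fw (n+2) ++ fw (n+1) := by rw [show n+3 = (n+1)+2 from rfl, fw]
      have hlen : (fw (n+3)).length = (fw (n+2)).length + (fw (n+1)).length := by
        rw [hw, length_append]
      have hN1pos : 0 < (fw (n+2)).length := fw_pos (n+2)
      have hN0pos : 0 < (fw (n+1)).length := fw_pos (n+1)
      have hb2 : (fw (n+2) ++ fw (n+1))[j]'(by simp only [length_append]; omega) = lb :=
        (List.getElem_of_eq hw (by omega)).symm.trans hb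
      by_cases hj1 : j + 1 < (fw (n+2)).length
      · -- inside fw (n+2)
        have hb' : (fw (n+2))[j]'(by omega) = lb :=
          (getElem_append_left (by omega)).symm.trans hb2
        have hdrop : (fw (n+3)).drop (j+1) = (fw (n+2)).drop (j+1) ++ fw (n+1) := by
          rw [hw]; exact drop_append_of_le_length (by omega)
        rcases main (n+2) j hj1 hb' with hmis | ⟨hodd, r, hr1, hr2, hr3⟩
        · left
          refine mis_mono hmis ?_ ?_
          · rw [hdrop]; exact prefix_append _ _
          · rw [hw]; exact prefix_append _ _
        · left
          have hr4 : r + 1 ≤ n + 1 := by omega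
          obtain ⟨xw, hx1, hx2⟩ := fw_swap r
          rw [c_odd hr1, c_even (by omega)] at hx1 hx2
          refine ⟨xw, ?_, ?_⟩
          · rw [hdrop, hr3]
            have h5 : xw ++ [la] <+: fw r ++ fw (r+1) := hx1 ▸ pre2 xw la lb
            exact h5.trans (prefix_append_left (fw r) (fw_prefix_mono (by omega) hr4))
          · have h6 : xw ++ [lb] <+: fw (r+2) := by
              rw [fw, hx2]; exact pre2 xw lb la
            exact h6.trans (fw_prefix_mono (by omega) (by omega))
      · by_cases hj2 : j + 1 = (fw (n+2)).length
        · -- boundary: the letter is the last letter of fw (n+2), which is c n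
          obtain ⟨y, hy⟩ := fw_decomp n
          have hb' : (fw (n+2))[j]'(by omega) = lb :=
            (getElem_append_left (by omega)).symm.trans hb2
          have hylen : (fw (n+2)).length = y.length + 2 := by rw [hy]; simp
          have hb3 : (y ++ [c (n+1), c n])[j]'(by rw [← hy]; omega) = lb :=
            (List.getElem_of_eq hy (by omega)).symm.trans hb'
          have hcval : c n = lb := by
            have h4 : (y ++ [c (n+1), c n])[j]'(by rw [← hy]; omega) = c n := by
              rw [getElem_append_right (by omega)]
              have : j - y.length = 1 := by omega
              simp [this]
            rw [h4] at hb3; exact hb3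
          have hpar : (n+3) % 2 = 1 := by
            by_contra hcon
            have hn1 : n % 2 = 1 := by omega
            rw [c_odd hn1] at hcval
            exact absurd hcval (by decide)
          right
          refine ⟨hpar, n+1, by omega, by omega, ?_⟩
          rw [hw, hj2]
          exact drop_left
        · -- inside fw (n+1)
          have hjge : (fw (n+2)).length ≤ j := by omega
          have hb' : (fw (n+1))[j - (fw (n+2)).length]'(by omega) = lb :=
            (getElem_append_right hjge).symm.trans hb2
          have hj'1 : j - (fw (n+2)).length + 1 < (fw (n+1)).length := by omega
          have hdrop : (fw (n+3)).drop (j+1) = (fw (n+1)).drop (j - (fw (n+2)).length + 1) := by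
            rw [hw, show j + 1 = (fw (n+2)).length + (j - (fw (n+2)).length + 1) by omega]
            rw [drop_append]; simp
          rcases main (n+1) _ hj'1 hb' with hmis | ⟨hodd, r, hr1, hr2, hr3⟩
          · left
            refine mis_mono hmis ?_ ?_
            · rw [hdrop]
            · exact fw_prefix_mono (by omega) (by omega)
          · right
            exact ⟨by omega, r, hr1, by omega, by rw [hdrop, hr3]⟩

end Stmt5

lemma rot_cat (p q : BWT.Word) : (p ++ q).rotate p.length = q ++ p := by
  rw [List.rotate_eq_drop_append_take (by simp), List.drop_left, List.take_left]


open Stmt5 in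
open BWT in
/-- for `v = s_{2k}·b` (`k ≥ 2`), the lexicographically largest conjugate is
`b·b·x_{2k}·a`, the second largest is `b·x_{2k}·a·b`, and every other conjugate is strictly
smaller than `b·x_{2k}·a·b`. -/
theorem stmt5 (k : ℕ) (hk : 2 ≤ k) :
    (∃ i < (fw (2*k) ++ [lb]).length,
      (fw (2*k) ++ [lb]).rotate i = [lb, lb] ++ x (2*k) ++ [la]) ∧
    (∃ i < (fw (2*k) ++ [lb]).length,
      (fw (2*k) ++ [lb]).rotate i = [lb] ++ x (2*k) ++ [la, lb]) ∧
    (∀ i < (fw (2*k) ++ [lb]).length,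
      (fw (2*k) ++ [lb]).rotate i ≤ [lb, lb] ++ x (2*k) ++ [la]) ∧
    (∀ i < (fw (2*k) ++ [lb]).length,
      (fw (2*k) ++ [lb]).rotate i ≠ [lb, lb] ++ x (2*k) ++ [la] →
      (fw (2*k) ++ [lb]).rotate i ≠ [lb] ++ x (2*k) ++ [la, lb] →
      (fw (2*k) ++ [lb]).rotate i < [lb] ++ x (2*k) ++ [la, lb]) := by
  obtain ⟨x', hsx⟩ : ∃ xw : Word, fw (2*k) = xw ++ [la, lb] := by
    obtain ⟨xw, hxw⟩ := fw_decomp (2*k - 2)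
    refine ⟨xw, ?_⟩
    rw [show 2*k - 2 + 2 = 2*k by omega] at hxw
    rw [hxw, c_odd (by omega), c_even (by omega)]
  set L := x'.length with hL
  have hn : (fw (2*k)).length = L + 2 := by rw [hsx]; simp [hL]
  have hxm : x (2*k) = x' := by
    rw [x, hn, hsx, Nat.add_sub_cancel]
    exact take_left' hL.symm
  set v : Word := fw (2*k) ++ [lb] with hv
  have hvlen : v.length = L + 3 := by rw [hv, length_append, hn]; simp
  -- the first letter of fw (2*k)
  obtain ⟨ts, hts⟩ : ∃ t, fw (2*k) = la :: t := by
    obtain ⟨t, ht⟩ := fw_prefix_a (2*k) (by omega)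
    exact ⟨t, ht.symm⟩
  -- rotation L+1 is the maximum [lb, lb] ++ x' ++ [la]
  have h1 : v.rotate (L+1) = [lb, lb] ++ (x' ++ [la]) := by
    have hveq : v = (x' ++ [la]) ++ [lb, lb] := by rw [hv, hsx]; simp
    have := rot_cat (x' ++ [la]) [lb, lb]
    rw [← hveq] at this
    simpa using this
  have h2 : v.rotate (L+2) = [lb] ++ fw (2*k) := by
    have := rot_cat (fw (2*k)) [lb]
    rw [hn] at this
    exact this
  have hA : ([lb, lb] ++ x (2*k) ++ [la] : Word) = [lb, lb] ++ (x' ++ [la]) := by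
    rw [hxm, append_assoc]
  have hB : ([lb] ++ x (2*k) ++ [la, lb] : Word) = [lb] ++ fw (2*k) := by
    rw [hxm, append_assoc, ← hsx]
  -- generic rotation analysis for i < L + 2 (inside fw (2*k))
  have hget : ∀ i, (hi : i < L + 2) → v[i]'(by omega) = (fw (2*k))[i]'(by omega) :=
    fun i hi => getElem_append_left (by omega)
  -- case: first letter of rotation is la
  have hcase_a : ∀ i, (hi : i < L + 2) → (fw (2*k))[i]'(by omega) = la →
      ∀ W : Word, [lb] <+: W → v.rotate i < W := by
    intro i hi hia W hW
    apply mis_lt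
    refine ⟨[], ?_, by simpa using hW⟩
    rw [rotate_eq_drop_append_take (by omega)]
    have hd : v.drop i = la :: v.drop (i+1) := by
      rw [drop_eq_getElem_cons (by omega : i < v.length), hget i hi, hia]
    rw [hd]
    exact List.IsPrefix.trans ⟨v.drop (i+1), rfl⟩ (prefix_append _ _)
  -- case: first letter lb, i ≤ L (not the last letter of fw (2*k)):
  -- the rotation starts with [lb, la] and its tail is mismatch-below fw (2*k)
  have hcase_b : ∀ i, (hi : i ≤ L) → (fw (2*k))[i]'(by omega) = lb →
      ([lb, la] <+: v.rotate i) ∧ v.rotate i < [lb] ++ fw (2*k) := by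
    intro i hi hib
    have hia : (fw (2*k))[i+1]'(by omega) = la := noBB (by omega) hib
    have hds : (fw (2*k)).drop i = lb :: la :: (fw (2*k)).drop (i+2) := by
      rw [drop_eq_getElem_cons (by omega : i < (fw (2*k)).length), hib,
        drop_eq_getElem_cons (by omega : i + 1 < (fw (2*k)).length), hia]
    have hdv : v.drop i = (fw (2*k)).drop i ++ [lb] := by
      rw [hv]; exact drop_append_of_le_length (by omega)
    have htv : v.take i = (fw (2*k)).take i := by
      rw [hv]; exact take_append_of_le_length (by omega)
    have hrot : v.rotate i = (fw (2*k)).drop i ++ [lb] ++ (fw (2*k)).take i := by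
      rw [rotate_eq_drop_append_take (by omega), hdv, htv]
    constructor
    · rw [hrot, hds]
      exact List.IsPrefix.trans ⟨(fw (2*k)).drop (i+2), rfl⟩
        ((prefix_append _ _).trans (prefix_append _ _))
    · -- use the main lemma
      have hmain := main (2*k) i (by omega) hib
      rcases hmain with ⟨p, hp1, hp2⟩ | ⟨hpar, _⟩
      · have : v.rotate i = lb :: ((fw (2*k)).drop (i+1) ++ ([lb] ++ (fw (2*k)).take i)) := by
          rw [hrot, drop_eq_getElem_cons (by omega : i < (fw (2*k)).length), hib]
          simp
        rw [this]
        exact List.Lex.cons (mis_lt ⟨p, hp1.trans (prefix_append _ _), hp2⟩)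
      · omega
  refine ⟨⟨L+1, by omega, by rw [h1, hA]⟩, ⟨L+2, by omega, by rw [h2, hB]⟩, ?_, ?_⟩
  · -- all rotations are ≤ the maximum
    intro i hi
    rw [hvlen] at hi
    by_cases hie : i = L + 1
    · subst hie; rw [h1, hA]
    · apply le_of_lt
      rw [hA]
      by_cases hie2 : i = L + 2
      · subst hie2
        rw [h2]
        apply mis_lt
        refine ⟨[lb], ?_, ⟨x' ++ [la], rfl⟩⟩
        rw [hts]
        exact ⟨ts, rfl⟩
      · have hilt : i < L + 2 := by omega
        cases hval : (fw (2*k))[i]'(by omega) with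
        | false => exact hcase_a i hilt hval _ ⟨lb :: (x' ++ [la]), rfl⟩
        | true =>
            have hb2 := hcase_b i (by omega) hval
            apply mis_lt
            exact ⟨[lb], hb2.1, ⟨x' ++ [la], rfl⟩⟩
  · -- all other rotations are < the second largest
    intro i hi hne1 hne2
    rw [hvlen] at hi
    by_cases hie : i = L + 1
    · exact absurd (by subst hie; rw [h1]; exact hA.symm) hne1
    · by_cases hie2 : i = L + 2
      · exact absurd (by subst hie2; rw [h2]; exact hB.symm) hne2
      · rw [hB]
        have hilt : i < L + 2 := by omega
        cases hval : (fw (2*k))[i]'(by omega) with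
        | false => exact hcase_a i hilt hval _ ⟨fw (2*k), rfl⟩
        | true => exact (hcase_b i (by omega) hval).2
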